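/- Let D be a maximal Arrow's single-peaked domain on a set A with extremal orders P and θ(P), where θ is the inherited permutation of D. If there exist distinct elements x, x', a ∈ A with θ(x) = x', θ(a) = a, and such that the restriction of P to {x, x', a} is x ≻ x' ≻ a, then D is not self-paired. -/

import Mathlib

/-- A list `l` represents a linear order on the finite set `A`:
it is duplicate-free and its members are exactly the elements of `A`,
listed from most to least preferred. -/
def IsLinOrd {α : Type*} (A : Finset α) (l : List α) : Prop :=
  l.Nodup ∧ ∀ a : α, a ∈ l ↔ a ∈ A

/-- The restriction of the order `l` to the subset `S`. -/
def restrictList {α : Type*} [DecidableEq α] (l : List α) (S : Finset α) : List α :=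
  l.filter (fun a => a ∈ S)

/-- The domain contraction of `D` on `S`: the set of restrictions to `S`
of the orders in `D` (as a set, so duplicates are automatically removed). -/
def contraction {α : Type*} [DecidableEq α] (D : Set (List α)) (S : Finset α) :
    Set (List α) :=
  (fun l => restrictList l S) '' D

/-- `D` contains a Condorcet triple: elements `a, b, c` and orders
`v₁, v₂, v₃ ∈ D` restricting on `{a,b,c}` to `a≻b≻c`, `b≻c≻a`, `c≻a≻b`. -/
def CondorcetTriple {α : Type*} [DecidableEq α] (D : Set (List α)) : Prop :=
  ∃ a b c : α, a ≠ b ∧ a ≠ c ∧ b ≠ c ∧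
    ∃ v₁ ∈ D, ∃ v₂ ∈ D, ∃ v₃ ∈ D,
      restrictList v₁ {a, b, c} = [a, b, c] ∧
      restrictList v₂ {a, b, c} = [b, c, a] ∧
      restrictList v₃ {a, b, c} = [c, a, b]

/-- A Condorcet domain on `A`: a set of linear orders on `A` with no Condorcet triple. -/
def IsCondorcetDomain {α : Type*} [DecidableEq α] (A : Finset α) (D : Set (List α)) : Prop :=
  (∀ l ∈ D, IsLinOrd A l) ∧ ¬ CondorcetTriple D

/-- A maximal Condorcet domain on `A`: no strict superset is a Condorcet domain on `A`. -/
def IsMaxCondorcetDomain {α : Type*} [DecidableEq α] (A : Finset α) (D : Set (List α)) : Prop :=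
  IsCondorcetDomain A D ∧ ∀ D' : Set (List α), IsCondorcetDomain A D' → D ⊆ D' → D' = D

/-- `x` is a never-bottom element of the triple `T` for `D`:
no order of `D` ranks `x` below both other elements of `T`. -/
def NeverBottom {α : Type*} [DecidableEq α] (D : Set (List α)) (T : Finset α) (x : α) : Prop :=
  x ∈ T ∧ ∀ l ∈ D, (restrictList l T).getLast? ≠ some x

/-- An Arrow's single-peaked domain on `A`: a Condorcet domain such that every
3-element subset of `A` has a never-bottom element. -/
def IsArrowSP {α : Type*} [DecidableEq α] (A : Finset α) (D : Set (List α)) : Prop :=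
  IsCondorcetDomain A D ∧
    ∀ T : Finset α, T ⊆ A → T.card = 3 → ∃ x : α, NeverBottom D T x

/-- A maximal Arrow's single-peaked domain on `A`. -/
def IsMaxArrowSP {α : Type*} [DecidableEq α] (A : Finset α) (D : Set (List α)) : Prop :=
  IsMaxCondorcetDomain A D ∧ IsArrowSP A D

/-- `a` is a terminal element of `D`: some order of `D` ends with (least element) `a`. -/
def TerminalElt {α : Type*} (D : Set (List α)) (a : α) : Prop :=
  ∃ l ∈ D, l.getLast? = some a

/-- `l` is an extremal order of `D`: `l ∈ D`, and the first and last elements of `l`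
are the two terminal elements of `D`. -/
def IsExtremal {α : Type*} (D : Set (List α)) (l : List α) : Prop :=
  l ∈ D ∧ ∃ s t : α, s ≠ t ∧ l.head? = some s ∧ l.getLast? = some t ∧
    TerminalElt D s ∧ TerminalElt D t ∧ ∀ a : α, TerminalElt D a → a = s ∨ a = t

/-- The position of `a` in the order `l`, the first element being in position 1. -/
def posIn {α : Type*} [DecidableEq α] (l : List α) (a : α) : ℕ :=
  l.idxOf a + 1

/-! ### Auxiliary lemmas -/

section Aux

variable {α : Type*} [DecidableEq α]

lemma aux_head?_filter {p : α → Bool} {l : List α} {b : α}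
    (h : l.head? = some b) (hb : p b = true) : (l.filter p).head? = some b := by
  cases l with
  | nil => simp at h
  | cons c t =>
    simp only [List.head?_cons, Option.some.injEq] at h
    subst h
    simp [List.filter_cons, hb]

lemma aux_getLast?_filter {p : α → Bool} {l : List α} {b : α}
    (h : l.getLast? = some b) (hb : p b = true) : (l.filter p).getLast? = some b := by
  rw [← List.head?_reverse] at h ⊢
  rw [← List.filter_reverse]
  exact aux_head?_filter h hb

lemma aux_mem_of_head? {l : List α} {b : α} (h : l.head? = some b) : b ∈ l := by
  cases l with
  | nil => simp at h
  | cons c t => simp only [List.head?_cons, Option.some.injEq] at h; simp [h.symm]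

lemma aux_mem_of_getLast? {l : List α} {b : α} (h : l.getLast? = some b) : b ∈ l := by
  rw [← List.head?_reverse] at h
  have := aux_mem_of_head? h
  simpa using this

lemma restrict_getLast {l : List α} {S : Finset α} {b : α}
    (h : l.getLast? = some b) (hb : b ∈ S) : (restrictList l S).getLast? = some b :=
  aux_getLast?_filter h (by simp [hb])

lemma restrict_restrict (l : List α) {T R : Finset α} (h : T ⊆ R) :
    restrictList (restrictList l R) T = restrictList l T := by
  unfold restrictList
  rw [List.filter_filter]
  refine List.filter_congr (fun c _ => ?_)
  by_cases hT : c ∈ T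
  · simp [hT, h hT]
  · simp [hT]

lemma restrict_cons_mem {α : Type*} [DecidableEq α] {β : α} {u : List α} {S : Finset α}
    (h : β ∈ S) : restrictList (β :: u) S = β :: restrictList u S := by
  simp [restrictList, List.filter_cons, h]

lemma restrict_cons_not_mem {α : Type*} [DecidableEq α] {β : α} {u : List α} {S : Finset α}
    (h : β ∉ S) : restrictList (β :: u) S = restrictList u S := by
  simp [restrictList, List.filter_cons, h]

lemma restrict_map (l : List α) (θ : Equiv.Perm α) {T : Finset α}
    (hT : ∀ b, θ b ∈ T ↔ b ∈ T) :
    restrictList (l.map θ) T = (restrictList l T).map θ := by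
  unfold restrictList
  rw [List.filter_map]
  congr 1
  refine List.filter_congr (fun c _ => ?_)
  simp [Function.comp, hT c]

/-- A "safe" bottom `b` for a triple `T'`: either some order of `D` already has
`b` at the bottom of `T'`, or `T'` has two distinct never-bottom elements. -/
def Safe (D : Set (List α)) (T' : Finset α) (b : α) : Prop :=
  (∃ l ∈ D, (restrictList l T').getLast? = some b) ∨
    ∃ w₁ w₂ : α, w₁ ≠ w₂ ∧ NeverBottom D T' w₁ ∧ NeverBottom D T' w₂

/-- Adding an order all of whose triple-bottoms are safe cannot create a
Condorcet triple (given the Arrow single-peaked property of `D`). -/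
lemma noNewCycle (D : Set (List α)) (v : List α)
    (hsafe : ∀ (T' : Finset α) (b : α), T'.card = 3 →
      (restrictList v T').getLast? = some b → Safe D T' b)
    (hASP : ∀ T : Finset α, T.card = 3 → ∃ w : α, NeverBottom D T w) :
    ¬ CondorcetTriple (D ∪ {v}) := by
  rintro ⟨a₀, b₀, c₀, hab, hac, hbc, v₁, hv₁, v₂, hv₂, v₃, hv₃, hr₁, hr₂, hr₃⟩
  have hcard : ({a₀, b₀, c₀} : Finset α).card = 3 := by
    rw [Finset.card_insert_of_notMem (by simp [hab, hac]),
      Finset.card_insert_of_notMem (by simp [hbc]), Finset.card_singleton]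
  obtain ⟨w, hwT, hwnb⟩ := hASP {a₀, b₀, c₀} hcard
  have key : ∀ (w0 : α), (∀ l ∈ D, (restrictList l {a₀, b₀, c₀}).getLast? ≠ some w0) →
      ∀ (uα uβ uγ : List α) (Lα Lβ Lγ : List α) (u₁ u₂ : α),
      uα ∈ D ∪ {v} → uβ ∈ D ∪ {v} → uγ ∈ D ∪ {v} →
      restrictList uα {a₀, b₀, c₀} = Lα → restrictList uβ {a₀, b₀, c₀} = Lβ →
      restrictList uγ {a₀, b₀, c₀} = Lγ →
      Lα ≠ Lβ → Lα ≠ Lγ →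
      Lα.getLast? = some w0 → Lβ.getLast? = some u₁ → Lγ.getLast? = some u₂ →
      u₁ ≠ w0 → u₂ ≠ w0 → u₁ ≠ u₂ →
      (∀ c ∈ ({a₀, b₀, c₀} : Finset α), c = w0 ∨ c = u₁ ∨ c = u₂) → False := by
    intro w0 hwnb uα uβ uγ Lα Lβ Lγ u₁ u₂ huα huβ huγ hrα hrβ hrγ hαβ hαγ hLα hLβ hLγ
      hu₁w hu₂w hu₁₂ hall
    have huαv : uα = v := by
      rcases huα with h | h
      · exact absurd (by rw [hrα, hLα]) (hwnb uα h)
      · exact h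
    have huβD : uβ ∈ D := by
      rcases huβ with h | h
      · exact h
      · exact absurd (by rw [← hrα, ← hrβ, huαv, h]) hαβ
    have huγD : uγ ∈ D := by
      rcases huγ with h | h
      · exact h
      · exact absurd (by rw [← hrα, ← hrγ, huαv, h]) hαγ
    have hvw : (restrictList v {a₀, b₀, c₀}).getLast? = some w0 := by
      rw [← huαv, hrα, hLα]
    rcases hsafe _ w0 hcard hvw with ⟨l, hl, hbot⟩ | ⟨w₁, w₂, hw12, hnb₁, hnb₂⟩
    · exact hwnb l hl hbot
    · have hne : ∀ w', NeverBottom D {a₀, b₀, c₀} w' → w' = w0 := by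
        rintro w' ⟨hw'T, hw'⟩
        rcases hall w' hw'T with h | h | h
        · exact h
        · exact absurd (by rw [hrβ, hLβ, h]) (hw' uβ huβD)
        · exact absurd (by rw [hrγ, hLγ, h]) (hw' uγ huγD)
      exact hw12 ((hne w₁ hnb₁).trans (hne w₂ hnb₂).symm)
  have hwT' : w = a₀ ∨ w = b₀ ∨ w = c₀ := by simpa using hwT
  have hallmem : ∀ c ∈ ({a₀, b₀, c₀} : Finset α), c = a₀ ∨ c = b₀ ∨ c = c₀ := by
    intro c hc; simpa using hc
  rcases hwT' with h | h | h
  · -- w = a₀ : bottom-a₀ order is [b₀, c₀, a₀]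
    rw [h] at hwnb
    refine key a₀ hwnb v₂ v₃ v₁ [b₀, c₀, a₀] [c₀, a₀, b₀] [a₀, b₀, c₀] b₀ c₀
      hv₂ hv₃ hv₁ hr₂ hr₃ hr₁ ?_ ?_ (by simp) (by simp) (by simp)
      hab.symm hac.symm hbc ?_
    · intro h; simp only [List.cons.injEq] at h; exact hbc h.1
    · intro h; simp only [List.cons.injEq] at h; exact hab h.1.symm
    · intro c hc; rcases hallmem c hc with h | h | h <;> tauto
  · -- w = b₀
    rw [h] at hwnb
    refine key b₀ hwnb v₃ v₁ v₂ [c₀, a₀, b₀] [a₀, b₀, c₀] [b₀, c₀, a₀] c₀ a₀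
      hv₃ hv₁ hv₂ hr₃ hr₁ hr₂ ?_ ?_ (by simp) (by simp) (by simp)
      hbc.symm hab hac.symm ?_
    · intro h; simp only [List.cons.injEq] at h; exact hac h.1.symm
    · intro h; simp only [List.cons.injEq] at h; exact hbc h.1.symm
    · intro c hc; rcases hallmem c hc with h | h | h <;> tauto
  · -- w = c₀
    rw [h] at hwnb
    refine key c₀ hwnb v₁ v₂ v₃ [a₀, b₀, c₀] [b₀, c₀, a₀] [c₀, a₀, b₀] a₀ b₀
      hv₁ hv₂ hv₃ hr₁ hr₂ hr₃ ?_ ?_ (by simp) (by simp) (by simp)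
      hac hbc hab ?_
    · intro h; simp only [List.cons.injEq] at h; exact hab h.1
    · intro h; simp only [List.cons.injEq] at h; exact hac h.1
    · intro c hc; rcases hallmem c hc with h | h | h <;> tauto

/-- The key construction: build (bottom-first) an enumeration `u` of `R` such
that every triple-bottom determined by `u` is safe, and (if `x, x', a` are all
still in `R`) the bottom of `{x, x', a}` is not `a`. -/
lemma buildRev [Fintype α] (D : Set (List α)) (P : List α) (hP : P ∈ D)
    (hlin : ∀ l ∈ D, IsLinOrd (Finset.univ : Finset α) l)
    (x x' a : α) (hxa : x ≠ a) :
    ∀ n (R : Finset α), R.card = n →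
      ∃ u : List α, u.Nodup ∧ (∀ b, b ∈ u ↔ b ∈ R) ∧
        (∀ (T' : Finset α) (b : α), T' ⊆ R → T'.card = 3 →
          (restrictList u T').head? = some b → Safe D T' b) ∧
        (x ∈ R → x' ∈ R → a ∈ R → (restrictList u {x, x', a}).head? ≠ some a) := by
  intro n
  induction n with
  | zero =>
    intro R hR
    have hRe : R = ∅ := Finset.card_eq_zero.mp hR
    subst hRe
    refine ⟨[], List.nodup_nil, by simp, ?_, ?_⟩
    · intro T' b _ _ h; simp [restrictList] at h
    · intro hx; exact absurd hx (Finset.notMem_empty x)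
  | succ n ih =>
    intro R hR
    -- generic step once a safe pick β has been found
    have step : ∀ β ∈ R,
        (∀ T' : Finset α, T' ⊆ R → T'.card = 3 → β ∈ T' → Safe D T' β) →
        (x ∈ R → x' ∈ R → a ∈ R → β ≠ a) →
        ∃ u : List α, u.Nodup ∧ (∀ b, b ∈ u ↔ b ∈ R) ∧
          (∀ (T' : Finset α) (b : α), T' ⊆ R → T'.card = 3 →
            (restrictList u T').head? = some b → Safe D T' b) ∧
          (x ∈ R → x' ∈ R → a ∈ R → (restrictList u {x, x', a}).head? ≠ some a) := by
      intro β hβR hsafeβ hβa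
      obtain ⟨u, hnd, hmem, hsafeu, hTu⟩ := ih (R.erase β)
        (by rw [Finset.card_erase_of_mem hβR, hR]; rfl)
      have hβu : β ∉ u := fun h => by
        have := (hmem β).mp h
        exact (Finset.mem_erase.mp this).1 rfl
      refine ⟨β :: u, List.nodup_cons.mpr ⟨hβu, hnd⟩, ?_, ?_, ?_⟩
      · intro b
        rw [List.mem_cons, hmem b, Finset.mem_erase]
        constructor
        · rintro (rfl | ⟨_, h⟩)
          · exact hβR
          · exact h
        · intro hbR
          by_cases hb : b = β
          · exact Or.inl hb
          · exact Or.inr ⟨hb, hbR⟩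
      · intro T' b hsub hc hhead
        by_cases hβT' : β ∈ T'
        · have hh : (restrictList (β :: u) T').head? = some β := by
            simp [restrictList, List.filter_cons, hβT']
          have hb : β = b := Option.some_injective α (hh.symm.trans hhead)
          subst hb
          exact hsafeβ T' hsub hc hβT'
        · have hh : restrictList (β :: u) T' = restrictList u T' := by
            simp [restrictList, List.filter_cons, hβT']
          rw [hh] at hhead
          refine hsafeu T' b (fun c hc' => Finset.mem_erase.mpr
            ⟨fun h => hβT' (h ▸ hc'), hsub hc'⟩) hc hhead
      · intro hx hx' ha
        by_cases hβT : β ∈ ({x, x', a} : Finset α)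
        · have hh : (restrictList (β :: u) {x, x', a}).head? = some β := by
            rw [restrict_cons_mem hβT]; rfl
          rw [hh]
          intro hcon
          exact hβa hx hx' ha (Option.some_injective α hcon)
        · have hh : restrictList (β :: u) {x, x', a} = restrictList u {x, x', a} :=
            restrict_cons_not_mem hβT
          rw [hh]
          have hxβ : x ≠ β := fun h => hβT (by simp [h])
          have hx'β : x' ≠ β := fun h => hβT (by simp [h])
          have haβ : a ≠ β := fun h => hβT (by simp [h])
          exact hTu (Finset.mem_erase.mpr ⟨hxβ, hx⟩) (Finset.mem_erase.mpr ⟨hx'β, hx'⟩)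
            (Finset.mem_erase.mpr ⟨haβ, ha⟩)
    by_cases hC : x ∈ R ∧ x' ∈ R ∧ a ∈ R
    · by_cases hstuck : ∀ l ∈ D, (restrictList l R).getLast? = some a
      · -- all orders of D bottom at `a` on R : pick from P restricted to R.erase a
        have hPx : x ∈ P := ((hlin P hP).2 x).mpr (Finset.mem_univ x)
        have hxRe : x ∈ R.erase a := Finset.mem_erase.mpr ⟨hxa, hC.1⟩
        have hne : restrictList P (R.erase a) ≠ [] := by
          intro h
          have hmm : x ∈ restrictList P (R.erase a) :=
            List.mem_filter.mpr ⟨hPx, by simpa using hxRe⟩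
          rw [h] at hmm; simp at hmm
        obtain ⟨β, hβ⟩ : ∃ β, (restrictList P (R.erase a)).getLast? = some β :=
          ⟨_, List.getLast?_eq_getLast_of_ne_nil hne⟩
        have hβmem : β ∈ R.erase a := by
          have hmm := aux_mem_of_getLast? hβ
          simp only [restrictList, List.mem_filter, decide_eq_true_eq] at hmm
          exact hmm.2
        have hβa : β ≠ a := (Finset.mem_erase.mp hβmem).1
        have hβR : β ∈ R := (Finset.mem_erase.mp hβmem).2
        refine step β hβR ?_ (fun _ _ _ => hβa)
        intro T' hsub hc hβT'
        by_cases haT' : a ∈ T'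
        · right
          have hc2 : (T'.erase a).card = 2 := by
            rw [Finset.card_erase_of_mem haT', hc]
          obtain ⟨w₁, w₂, hww, hTe⟩ := Finset.card_eq_two.mp hc2
          have hw₁ : w₁ ∈ T'.erase a := by rw [hTe]; simp
          have hw₂ : w₂ ∈ T'.erase a := by rw [hTe]; simp
          have mk : ∀ w', w' ∈ T'.erase a → NeverBottom D T' w' := by
            intro w' hw'
            refine ⟨(Finset.mem_erase.mp hw').2, fun l hl hcon => ?_⟩
            have hbot : (restrictList l T').getLast? = some a := by
              rw [← restrict_restrict l hsub]
              exact restrict_getLast (hstuck l hl) haT'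
            rw [hbot] at hcon
            exact (Finset.mem_erase.mp hw').1 (Option.some_injective α hcon).symm
          exact ⟨w₁, w₂, hww, mk w₁ hw₁, mk w₂ hw₂⟩
        · left
          refine ⟨P, hP, ?_⟩
          have hsub' : T' ⊆ R.erase a := fun c hc' =>
            Finset.mem_erase.mpr ⟨fun h => haT' (h ▸ hc'), hsub hc'⟩
          rw [← restrict_restrict P hsub']
          exact restrict_getLast hβ hβT'
      · push_neg at hstuck
        obtain ⟨l, hl, hla⟩ := hstuck
        have hxl : x ∈ l := ((hlin l hl).2 x).mpr (Finset.mem_univ x)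
        have hne : restrictList l R ≠ [] := by
          intro h
          have hmm : x ∈ restrictList l R :=
            List.mem_filter.mpr ⟨hxl, by simpa using hC.1⟩
          rw [h] at hmm; simp at hmm
        obtain ⟨β, hβ⟩ : ∃ β, (restrictList l R).getLast? = some β :=
          ⟨_, List.getLast?_eq_getLast_of_ne_nil hne⟩
        have hβR : β ∈ R := by
          have hmm := aux_mem_of_getLast? hβ
          simp only [restrictList, List.mem_filter, decide_eq_true_eq] at hmm
          exact hmm.2
        have hβa : β ≠ a := fun h => hla (h ▸ hβ)
        refine step β hβR ?_ (fun _ _ _ => hβa)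
        intro T' hsub hc hβT'
        left
        refine ⟨l, hl, ?_⟩
        rw [← restrict_restrict l hsub]
        exact restrict_getLast hβ hβT'
    · have hRpos : 0 < R.card := by rw [hR]; exact Nat.succ_pos n
      obtain ⟨c, hc⟩ := Finset.card_pos.mp hRpos
      have hcP : c ∈ P := ((hlin P hP).2 c).mpr (Finset.mem_univ c)
      have hne : restrictList P R ≠ [] := by
        intro h
        have hmm : c ∈ restrictList P R :=
          List.mem_filter.mpr ⟨hcP, by simpa using hc⟩
        rw [h] at hmm; simp at hmm
      obtain ⟨β, hβ⟩ : ∃ β, (restrictList P R).getLast? = some β :=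
        ⟨_, List.getLast?_eq_getLast_of_ne_nil hne⟩
      have hβR : β ∈ R := by
        have hmm := aux_mem_of_getLast? hβ
        simp only [restrictList, List.mem_filter, decide_eq_true_eq] at hmm
        exact hmm.2
      refine step β hβR ?_ (fun hx hx' ha => absurd ⟨hx, hx', ha⟩ hC)
      intro T' hsub hc' hβT'
      left
      refine ⟨P, hP, ?_⟩
      rw [← restrict_restrict P hsub]
      exact restrict_getLast hβ hβT'

end Aux

/-- If `D` is a maximal Arrow's single-peaked domain with extremal orders `P` and
`θ(P)` (`θ` the inherited permutation), and there are distinct `x, x', a` with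
`θ(x) = x'`, `θ(a) = a` and the restriction of `P` to `{x, x', a}` equal to
`x ≻ x' ≻ a`, then `D` is not self-paired. -/
theorem stmt_14 {α : Type*} [Fintype α] [DecidableEq α] (D : Set (List α))
    (hD : IsMaxArrowSP (Finset.univ : Finset α) D) (P Q : List α) (hPQ : P ≠ Q)
    (eP : IsExtremal D P) (eQ : IsExtremal D Q)
    (hu : ∀ l : List α, IsExtremal D l → l = P ∨ l = Q)
    (θ : Equiv.Perm α) (hθ : P.map θ = Q)
    (x x' a : α) (hxx' : x ≠ x') (hxa : x ≠ a) (hx'a : x' ≠ a)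
    (h1 : θ x = x') (h2 : θ a = a)
    (h3 : restrictList P {x, x', a} = [x, x', a]) :
    (fun l : List α => l.map θ) '' D ≠ D := by
  intro hself
  obtain ⟨⟨⟨hlin, hnoCT⟩, hmaxi⟩, _, hASP⟩ := hD
  have hPD : P ∈ D := eP.1
  have hQD : Q ∈ D := eQ.1
  have hPlin := hlin P hPD
  have hmapθD : ∀ l ∈ D, l.map θ ∈ D := fun l hl => by
    rw [← hself]; exact ⟨l, hl, rfl⟩
  have hpre : ∀ l ∈ D, ∃ l₀ ∈ D, l₀.map θ = l := fun l hl => by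
    rw [← hself] at hl; exact hl
  obtain ⟨_, sQ, tQ, hst, hhQ, hlQ, hTs, hTt, huniq⟩ := eQ
  have hterm : ∀ c, TerminalElt D c → TerminalElt D (θ c) := by
    rintro c ⟨l, hl, hlast⟩
    exact ⟨l.map θ, hmapθD l hl, by rw [List.getLast?_map, hlast]; rfl⟩
  have htermback : ∀ c, TerminalElt D c → TerminalElt D (θ.symm c) := by
    rintro c ⟨l, hl, hlast⟩
    obtain ⟨l₀, hl₀, rfl⟩ := hpre l hl
    rw [List.getLast?_map] at hlast
    refine ⟨l₀, hl₀, ?_⟩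
    cases h : l₀.getLast? with
    | none => rw [h] at hlast; simp at hlast
    | some d =>
      rw [h] at hlast
      simp only [Option.map_some, Option.some.injEq] at hlast
      rw [← hlast]
      simp
  have heQθ : IsExtremal D (Q.map θ) := by
    refine ⟨hmapθD Q hQD, θ sQ, θ tQ, fun h => hst (θ.injective h), ?_, ?_,
      hterm _ hTs, hterm _ hTt, ?_⟩
    · rw [List.head?_map, hhQ]; rfl
    · rw [List.getLast?_map, hlQ]; rfl
    · intro c hc
      rcases huniq (θ.symm c) (htermback c hc) with h | h
      · left; rw [← h, Equiv.apply_symm_apply]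
      · right; rw [← h, Equiv.apply_symm_apply]
  have hQθ : Q.map θ = P := by
    rcases hu _ heQθ with h | h
    · exact h
    · exfalso
      have hmm : P.map (⇑θ ∘ ⇑θ) = P.map ⇑θ := by
        rw [← List.map_map, hθ]; exact h
      have hid : ∀ b : α, θ b = b := fun b =>
        θ.injective (List.map_inj_left.mp hmm b ((hPlin.2 b).mpr (Finset.mem_univ b)))
      have : P.map θ = P := by
        rw [show ⇑θ = id from funext hid, List.map_id]
      exact hPQ (this.symm.trans hθ)
  have θθ : ∀ b : α, θ (θ b) = b := by
    intro b
    have hmm : P.map (⇑θ ∘ ⇑θ) = P.map id := by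
      rw [← List.map_map, hθ, hQθ, List.map_id]
    exact List.map_inj_left.mp hmm b ((hPlin.2 b).mpr (Finset.mem_univ b))
  have hθx' : θ x' = x := by rw [← h1, θθ]
  have hTcard : ({x, x', a} : Finset α).card = 3 := by
    rw [Finset.card_insert_of_notMem (by simp [hxx', hxa]),
      Finset.card_insert_of_notMem (by simp [hx'a]), Finset.card_singleton]
  have hfwd : ∀ b ∈ ({x, x', a} : Finset α), θ b ∈ ({x, x', a} : Finset α) := by
    intro b hb
    simp only [Finset.mem_insert, Finset.mem_singleton] at hb ⊢
    rcases hb with rfl | rfl | rfl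
    · right; left; exact h1
    · left; exact hθx'
    · right; right; exact h2
  have hθT : ∀ b, θ b ∈ ({x, x', a} : Finset α) ↔ b ∈ ({x, x', a} : Finset α) := by
    intro b
    constructor
    · intro h
      have := hfwd (θ b) h
      rwa [θθ] at this
    · exact hfwd b
  have hNBsym : ∀ w', NeverBottom D {x, x', a} w' → NeverBottom D {x, x', a} (θ w') := by
    rintro w' ⟨hw'T, hw'⟩
    refine ⟨hfwd w' hw'T, ?_⟩
    intro l hl hcon
    obtain ⟨l₀, hl₀, rfl⟩ := hpre l hl
    rw [restrict_map l₀ θ hθT, List.getLast?_map] at hcon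
    cases h : (restrictList l₀ {x, x', a}).getLast? with
    | none => rw [h] at hcon; simp at hcon
    | some d =>
      rw [h] at hcon
      simp only [Option.map_some, Option.some.injEq] at hcon
      exact hw' l₀ hl₀ (by rw [h, θ.injective hcon])
  obtain ⟨w, hwT, hwnb⟩ := hASP {x, x', a} (Finset.subset_univ _) hTcard
  have hPbot : (restrictList P {x, x', a}).getLast? = some a := by rw [h3]; rfl
  have hwa : w ≠ a := fun h => hwnb P hPD (h ▸ hPbot)
  have hNBx : NeverBottom D {x, x', a} x ∧ NeverBottom D {x, x', a} x' := by
    have hwT' : w = x ∨ w = x' := by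
      simp only [Finset.mem_insert, Finset.mem_singleton] at hwT
      tauto
    rcases hwT' with rfl | rfl
    · refine ⟨⟨hwT, hwnb⟩, ?_⟩
      have := hNBsym w ⟨hwT, hwnb⟩
      rwa [h1] at this
    · refine ⟨?_, ⟨hwT, hwnb⟩⟩
      have := hNBsym w ⟨hwT, hwnb⟩
      rwa [hθx'] at this
  obtain ⟨u, hund, humem, husafe, huT⟩ :=
    buildRev D P hPD hlin x x' a hxa (Finset.univ : Finset α).card Finset.univ rfl
  have hvmem : ∀ b : α, b ∈ u.reverse ↔ b ∈ (Finset.univ : Finset α) := fun b => by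
    rw [List.mem_reverse]; exact humem b
  have hvlin : IsLinOrd (Finset.univ : Finset α) u.reverse :=
    ⟨List.nodup_reverse.mpr hund, hvmem⟩
  have hrest : ∀ T' : Finset α, restrictList u.reverse T' = (restrictList u T').reverse := by
    intro T'
    simp [restrictList, List.filter_reverse]
  have hvsafe : ∀ (T' : Finset α) (b : α), T'.card = 3 →
      (restrictList u.reverse T').getLast? = some b → Safe D T' b := by
    intro T' b hc hlast
    rw [hrest, List.getLast?_reverse] at hlast
    exact husafe T' b (Finset.subset_univ _) hc hlast
  have hDvCD : IsCondorcetDomain (Finset.univ : Finset α) (D ∪ {u.reverse}) := by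
    constructor
    · rintro l (hl | hl)
      · exact hlin l hl
      · rw [Set.mem_singleton_iff] at hl
        rw [hl]; exact hvlin
    · exact noNewCycle D u.reverse hvsafe
        (fun T hc => hASP T (Finset.subset_univ _) hc)
  have hveq : D ∪ {u.reverse} = D := hmaxi _ hDvCD Set.subset_union_left
  have hvD : u.reverse ∈ D := by
    rw [← hveq]; exact Set.mem_union_right D rfl
  have hxv : x ∈ restrictList u.reverse {x, x', a} := by
    simp only [restrictList, List.mem_filter, decide_eq_true_eq]
    exact ⟨(hvmem x).mpr (Finset.mem_univ x), by simp⟩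
  have hneT : restrictList u.reverse {x, x', a} ≠ [] := by
    intro h; rw [h] at hxv; simp at hxv
  obtain ⟨β, hβ⟩ : ∃ β, (restrictList u.reverse {x, x', a}).getLast? = some β :=
    ⟨_, List.getLast?_eq_getLast_of_ne_nil hneT⟩
  have hβT : β ∈ ({x, x', a} : Finset α) := by
    have hmm := aux_mem_of_getLast? hβ
    simp only [restrictList, List.mem_filter, decide_eq_true_eq] at hmm
    exact hmm.2
  have hβa : β ≠ a := by
    intro h
    apply huT (Finset.mem_univ x) (Finset.mem_univ x') (Finset.mem_univ a)
    rw [← List.getLast?_reverse, ← hrest, hβ, h]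
  have hβxx : β = x ∨ β = x' := by
    simp only [Finset.mem_insert, Finset.mem_singleton] at hβT
    tauto
  rcases hβxx with rfl | rfl
  · exact hNBx.1.2 u.reverse hvD hβ
  · exact hNBx.2.2 u.reverse hvD hβ
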